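/- arXiv:2003.06314 — 3 statements merged into one kernel-verified Lean document; each statement's English description precedes it below -/
import Mathlib

section
/- Let ω be an ultrafilter on ℕ, (A_i) a sequence of unital C*-algebras, and a = (a_i) an element of the ultraproduct ∏_{i→ω} A_i. If a is invertible in the ultraproduct, then the set {i ∈ ℕ : a_i is invertible in A_i} belongs to ω. -/
open Filter in
/-- If a bounded sequence `a = (a i)` represents an invertible element of the
C*-ultraproduct `∏_{i→ω} A i` (i.e. there is a bounded sequence `d` with
`a i * d i → 1` and `d i * a i → 1` along `ω`), then `{i | a i is invertible} ∈ ω`. -/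
theorem ultraproduct_invertible_index_set (A : ℕ → Type*) [∀ i, CStarAlgebra (A i)]
    (ω : Ultrafilter ℕ) (a : ∀ i, A i) (ha : ∃ C : ℝ, ∀ i, ‖a i‖ ≤ C)
    (hinv : ∃ d : ∀ i, A i, (∃ C : ℝ, ∀ i, ‖d i‖ ≤ C) ∧
      Tendsto (fun i => ‖a i * d i - 1‖) (ω : Filter ℕ) (nhds 0) ∧
      Tendsto (fun i => ‖d i * a i - 1‖) (ω : Filter ℕ) (nhds 0)) :
    {i : ℕ | IsUnit (a i)} ∈ ω := by
  obtain ⟨d, -, h1, h2⟩ := hinv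
  have e1 : ∀ᶠ i in (ω : Filter ℕ), ‖a i * d i - 1‖ < 1 := by
    have := h1.eventually (eventually_lt_nhds (show (0:ℝ) < 1 by norm_num))
    exact this
  have e2 : ∀ᶠ i in (ω : Filter ℕ), ‖d i * a i - 1‖ < 1 := by
    have := h2.eventually (eventually_lt_nhds (show (0:ℝ) < 1 by norm_num))
    exact this
  filter_upwards [e1, e2] with i hi1 hi2
  have hu : IsUnit (a i * d i) := by
    have := (Units.oneSub (1 - a i * d i) (by rwa [norm_sub_rev] at hi1)).isUnit
    simpa using this
  have hv : IsUnit (d i * a i) := by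
    have := (Units.oneSub (1 - d i * a i) (by rwa [norm_sub_rev] at hi2)).isUnit
    simpa using this
  obtain ⟨u, hu⟩ := hu
  obtain ⟨v, hv⟩ := hv
  -- a i * (d i * u⁻¹) = 1 and (v⁻¹ * d i) * a i = 1
  have hr : a i * (d i * ↑u⁻¹) = 1 := by
    rw [← mul_assoc, ← hu, u.mul_inv]
  have hl : (↑v⁻¹ * d i) * a i = 1 := by
    rw [mul_assoc, ← hv, v.inv_mul]
  have heq : d i * ↑u⁻¹ = ↑v⁻¹ * d i := by
    calc d i * ↑u⁻¹ = ((↑v⁻¹ * d i) * a i) * (d i * ↑u⁻¹) := by rw [hl, one_mul]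
    _ = (↑v⁻¹ * d i) * (a i * (d i * ↑u⁻¹)) := by simp only [mul_assoc]
    _ = ↑v⁻¹ * d i := by rw [hr, mul_one]
  exact isUnit_iff_exists.mpr ⟨d i * ↑u⁻¹, hr, by rw [heq]; exact hl⟩
end

section
/- Let D be a simple unital C*-algebra, B a C*-algebra, φ : D → B a c.p.c. order zero map with associated *-homomorphism Φ : C₀(0,1] ⊗ D → B, and π : B → C a surjective *-homomorphism. If π(φ(1)) has spectrum [0,1], then π ∘ Φ is injective. -/
/-- A map `φ : A → B` between C*-algebras is completely positive, contractive and
order zero if it is linear, contractive, completely positive (positive matrices over `A`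
are sent entrywise to positive matrices over `B`) and sends orthogonal positive elements
to orthogonal elements. -/
structure IsCPCOrderZero {A B : Type*} [NonUnitalCStarAlgebra A] [NonUnitalCStarAlgebra B]
    [PartialOrder A] [StarOrderedRing A] [PartialOrder B] [StarOrderedRing B]
    (φ : A → B) : Prop where
  map_add : ∀ a b : A, φ (a + b) = φ a + φ b
  map_smul : ∀ (c : ℂ) (a : A), φ (c • a) = c • φ a
  contractive : ∀ a : A, ‖φ a‖ ≤ ‖a‖
  completelyPositive : ∀ (n : ℕ) (N : Matrix (Fin n) (Fin n) A),
    ∃ P : Matrix (Fin n) (Fin n) B, (N.conjTranspose * N).map φ = P.conjTranspose * P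
  orderZero : ∀ a b : A, 0 ≤ a → 0 ≤ b → a * b = 0 → φ a * φ b = 0
/-- The cone `C₀(0,1] ⊗ A`, realised concretely as the C*-algebra of continuous
functions `f : [0,1] → A` with `f 0 = 0`. -/
def cone (A : Type*) [NonUnitalCStarAlgebra A] :
    NonUnitalStarSubalgebra ℂ C(unitInterval, A) where
  carrier := {f | f 0 = 0}
  add_mem' := by intro f g hf hg; simp_all [Set.mem_setOf_eq]
  zero_mem' := by simp
  mul_mem' := by intro f g hf hg; simp_all [Set.mem_setOf_eq]
  smul_mem' := by intro c f hf; simp_all [Set.mem_setOf_eq]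
  star_mem' := by intro f hf; simp_all [Set.mem_setOf_eq]

/-- The elementary tensor `id_{(0,1]} ⊗ a`, i.e. the function `t ↦ t • a`,
as an element of the cone over `A`. -/
noncomputable def coneElem {A : Type*} [NonUnitalCStarAlgebra A] (a : A) : cone A :=
  ⟨⟨fun t => (t : ℝ) • a, by fun_prop⟩, by
    show ((0 : unitInterval) : ℝ) • a = 0
    simp⟩

section Aux

variable {D : Type*} [CStarAlgebra D]

instance cone_isClosed : IsClosed ((cone D : Set C(unitInterval, D))) := by
  have h : (cone D : Set C(unitInterval, D)) =
      (fun f : C(unitInterval, D) => f 0) ⁻¹' {0} := rfl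
  rw [h]
  exact isClosed_singleton.preimage (continuous_eval_const 0)

/-- Scalar functions vanishing at `0`, pushed into the cone. -/
noncomputable def toCone (q : C(unitInterval, ℝ)) : cone D :=
  ⟨⟨fun t => (q t - q 0) • (1 : D), by fun_prop⟩, by
    show (q 0 - q 0) • (1 : D) = 0
    simp⟩

lemma toCone_coe_apply (q : C(unitInterval, ℝ)) (t : unitInterval) :
    ((toCone (D := D) q : C(unitInterval, D)) t) = (q t - q 0) • (1 : D) := rfl

lemma cone_norm_def (x : cone D) : ‖x‖ = ‖(x : C(unitInterval, D))‖ := rfl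

lemma toCone_norm_le [Nontrivial D] (q : C(unitInterval, ℝ)) :
    ‖toCone (D := D) q‖ ≤ 2 * ‖q‖ := by
  rw [cone_norm_def]
  refine ContinuousMap.norm_le _ (by positivity) |>.mpr fun t => ?_
  rw [toCone_coe_apply, norm_smul, norm_one, mul_one]
  calc ‖q t - q 0‖ ≤ ‖q t‖ + ‖q 0‖ := norm_sub_le _ _
    _ ≤ ‖q‖ + ‖q‖ := add_le_add (q.norm_coe_le_norm t) (q.norm_coe_le_norm 0)
    _ = 2 * ‖q‖ := by ring

lemma toCone_sub (q q' : C(unitInterval, ℝ)) :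
    toCone (D := D) q - toCone q' = toCone (q - q') := by
  apply Subtype.ext
  ext t
  show (q t - q 0) • (1 : D) - (q' t - q' 0) • 1 =
    ((q - q') t - (q - q') 0) • 1
  rw [← sub_smul]
  congr 1
  simp [ContinuousMap.sub_apply]
  ring

lemma toCone_continuous [Nontrivial D] : Continuous (toCone (D := D)) := by
  refine (LipschitzWith.of_dist_le_mul (K := 2) fun q q' => ?_).continuous
  rw [dist_eq_norm, dist_eq_norm, toCone_sub]
  simpa using toCone_norm_le (D := D) (q - q')

lemma real_smul_nonneg [PartialOrder D] [StarOrderedRing D] {ρ : ℝ} (hρ : 0 ≤ ρ)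
    {x : D} (hx : 0 ≤ x) : 0 ≤ ρ • x := by
  have h : ρ • x = star (Real.sqrt ρ • (1 : D)) * x * (Real.sqrt ρ • (1 : D)) := by
    rw [star_smul, star_trivial, star_one, smul_mul_assoc, one_mul, mul_smul_comm,
      mul_one, smul_smul, Real.mul_self_sqrt hρ]
  rw [h]
  exact star_left_conjugate_nonneg hx _

lemma algebraMap_nonneg' [PartialOrder D] [StarOrderedRing D] {ρ : ℝ} (hρ : 0 ≤ ρ) :
    0 ≤ algebraMap ℝ D ρ := by
  rw [Algebra.algebraMap_eq_smul_one]
  refine real_smul_nonneg hρ ?_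
  simpa using star_mul_self_nonneg (1 : D)

lemma algebraMap_mono' [PartialOrder D] [StarOrderedRing D] {ρ ρ' : ℝ} (h : ρ ≤ ρ') :
    algebraMap ℝ D ρ ≤ algebraMap ℝ D ρ' := by
  rw [← sub_nonneg, ← map_sub]
  exact algebraMap_nonneg' (sub_nonneg.mpr h)

lemma real_smul_mono [PartialOrder D] [StarOrderedRing D] {ρ : ℝ} (hρ : 0 ≤ ρ)
    {x y : D} (h : x ≤ y) : ρ • x ≤ ρ • y := by
  rw [← sub_nonneg, ← smul_sub]
  exact real_smul_nonneg hρ (sub_nonneg.mpr h)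

end Aux

set_option maxHeartbeats 1600000

/-- Let `D` be a simple unital C*-algebra, `φ : D → B` a c.p.c. order zero map with
associated *-homomorphism `Φ : C₀(0,1] ⊗ D → B`, and `π : B → C` a surjective
*-homomorphism.  If `π(φ(1))` has spectrum `[0,1]`, then `π ∘ Φ` is injective. -/
theorem cone_hom_injective_of_full_spectrum (D B C : Type*)
    [CStarAlgebra D] [CStarAlgebra B] [CStarAlgebra C]
    [PartialOrder D] [StarOrderedRing D] [PartialOrder B] [StarOrderedRing B]
    (hsimple : ∀ K : TwoSidedIdeal D, IsClosed (K : Set D) → K = ⊥ ∨ K = ⊤)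
    (φ : D → B) (hφ : IsCPCOrderZero φ)
    (Φ : cone D →⋆ₙₐ[ℂ] B) (hΦ : ∀ d : D, Φ (coneElem d) = φ d)
    (π : B →⋆ₐ[ℂ] C) (hπ : Function.Surjective π)
    (hspec : spectrum ℝ (π (φ 1)) = Set.Icc 0 1) :
    Function.Injective (fun x : cone D => π (Φ x)) := by
  classical
  rcases subsingleton_or_nontrivial D with hD | hD
  · intro x y _
    exact Subtype.ext (ContinuousMap.ext fun t => Subsingleton.elim _ _)
  -- the composite hom ψ = π ∘ Φ
  set ψ : cone D →⋆ₙₐ[ℂ] C := π.toNonUnitalStarAlgHom.comp Φ with hψdef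
  have hψ : ∀ x : cone D, ψ x = π (Φ x) := fun x => rfl
  have hgoal : (fun x : cone D => π (Φ x)) = ⇑ψ := rfl
  rw [hgoal, injective_iff_map_eq_zero ψ]
  intro f hf
  by_contra hfne
  have hψcont : Continuous ψ :=
    AddMonoidHomClass.continuous_of_bound ψ 1 fun x => by
      simpa using NonUnitalStarAlgHom.norm_apply_le ψ x
  -- selfadjointness of a := π (φ 1)
  obtain ⟨P, hP⟩ := hφ.completelyPositive 1 (fun _ _ => (1 : D))
  have hφ1 : φ 1 = star (P 0 0) * P 0 0 := by
    have h := congrFun (congrFun hP 0) 0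
    rw [Matrix.map_apply, Matrix.mul_apply (M := P.conjTranspose), Fin.sum_univ_one,
      Matrix.conjTranspose_apply] at h
    rw [← h]
    congr 1
    change 1 = ∑ j : Fin 1, star (1 : D) * 1
    simp
  set a : C := π (φ 1) with ha_def
  have ha : IsSelfAdjoint a := by
    rw [ha_def, hφ1, map_mul, map_star]
    exact IsSelfAdjoint.star_mul_self _
  have hψx1 : ψ (coneElem 1) = a := by rw [hψ, hΦ]
  -- comparison of ψ on scalar functions with the functional calculus of a
  have hsub : ∀ x : ℝ, x ∈ spectrum ℝ a → x ∈ unitInterval := fun x hx => by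
    rw [hspec] at hx; exact hx
  set eC : C(spectrum ℝ a, unitInterval) :=
    ⟨fun z => ⟨z.1, hsub z.1 z.2⟩,
      Continuous.subtype_mk continuous_subtype_val _⟩ with heC_def
  have heC : ∀ z : spectrum ℝ a, ((eC z : unitInterval) : ℝ) = z.1 := fun z => rfl
  set Θ : C(unitInterval, ℝ) →⋆ₐ[ℝ] C :=
    (cfcHom ha (R := ℝ)).comp (ContinuousMap.compStarAlgHom' ℝ ℝ eC) with hTdef
  have hT_apply : ∀ q : C(unitInterval, ℝ), Θ q = cfcHom ha (q.comp eC) := fun q => rfl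
  have hT_cont : Continuous Θ :=
    (cfcHom_continuous ha).comp (ContinuousMap.continuous_precomp eC)
  set xc : C(unitInterval, ℝ) := (Polynomial.X : Polynomial ℝ).toContinuousMapOn unitInterval
    with hxc_def
  have hxc_apply : ∀ t : unitInterval, xc t = (t : ℝ) := fun t => by
    simp [hxc_def, Polynomial.toContinuousMapOn_apply, Polynomial.toContinuousMap_apply]
  have hTxc : Θ xc = a := by
    have h : xc.comp eC = (ContinuousMap.id ℝ).restrict (spectrum ℝ a) := by
      ext z
      simp [ContinuousMap.comp_apply, hxc_apply, heC]
    rw [hT_apply, h, cfcHom_id ha]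
  -- powers
  have hpow : ∀ n : ℕ, ∃ u : cone D,
      (∀ t : unitInterval, (u : C(unitInterval, D)) t = ((t : ℝ) ^ (n + 1)) • (1 : D)) ∧
      ψ u = a ^ (n + 1) := by
    intro n
    induction n with
    | zero =>
      refine ⟨coneElem 1, fun t => by simp [coneElem], by rw [hψx1, pow_one]⟩
    | succ n ih =>
      obtain ⟨u, hu1, hu2⟩ := ih
      refine ⟨u * coneElem 1, fun t => ?_, ?_⟩
      · show (u : C(unitInterval, D)) t * ((coneElem (1:D) : C(unitInterval, D)) t) = _
        rw [hu1]
        show ((t : ℝ) ^ (n + 1)) • (1 : D) * ((t : ℝ) • (1 : D)) = _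
        rw [smul_mul_smul_comm, one_mul, ← pow_succ]
      · rw [map_mul, hu2, hψx1, ← pow_succ]
  -- the two maps agree on polynomials
  set L2 : C(unitInterval, ℝ) → C := fun q => ψ (toCone q) + q 0 • (1 : C) with hL2def
  have hL2_cont : Continuous L2 := by
    refine Continuous.add (hψcont.comp toCone_continuous) ?_
    exact (continuous_eval_const (F := C(unitInterval, ℝ)) (0 : unitInterval)).smul continuous_const
  have hL2_add : ∀ u v, L2 (u + v) = L2 u + L2 v := by
    intro u v
    have h : toCone (D := D) (u + v) = toCone u + toCone v := by
      have h2 := toCone_sub (D := D) (u + v) v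
      rw [add_sub_cancel_right] at h2
      rw [← h2]
      abel
    simp only [hL2def, h, map_add, ContinuousMap.add_apply, add_smul]
    abel
  have hL2_smul : ∀ (w : ℝ) (q : C(unitInterval, ℝ)), L2 (w • q) = w • L2 q := by
    intro w q
    have h : toCone (D := D) (w • q) = ((w : ℂ)) • toCone q := by
      apply Subtype.ext
      rw [SetLike.val_smul]
      ext t
      rw [ContinuousMap.smul_apply, toCone_coe_apply, toCone_coe_apply]
      rw [← Complex.coe_algebraMap, algebraMap_smul, smul_smul]
      congr 1
      rw [ContinuousMap.smul_apply, ContinuousMap.smul_apply, smul_eq_mul, smul_eq_mul]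
      ring
    have h2 : ψ (toCone (D := D) (w • q)) = w • ψ (toCone q) := by
      rw [h, map_smul, ← Complex.coe_algebraMap, algebraMap_smul]
    show ψ (toCone (D := D) (w • q)) + (w • q) 0 • (1 : C) = w • (ψ (toCone q) + q 0 • (1 : C))
    rw [h2, smul_add, ContinuousMap.smul_apply, smul_eq_mul, ← smul_smul]
  have hL2pow : ∀ i : ℕ, L2 (xc ^ i) = a ^ i := by
    intro i
    match i with
    | 0 =>
      have h : toCone (D := D) (xc ^ 0) = 0 := by
        apply Subtype.ext
        ext t
        show ((xc ^ 0) t - (xc ^ 0) 0) • (1 : D) = 0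
        simp
      show ψ (toCone (xc ^ 0)) + ((xc ^ 0) 0) • (1 : C) = a ^ 0
      rw [h, map_zero, zero_add, pow_zero, ContinuousMap.one_apply, one_smul, pow_zero]
    | n + 1 =>
      obtain ⟨u, hu1, hu2⟩ := hpow n
      have hx0 : (xc ^ (n + 1)) 0 = 0 := by
        rw [ContinuousMap.pow_apply, hxc_apply]
        norm_num
      have h : toCone (D := D) (xc ^ (n + 1)) = u := by
        apply Subtype.ext
        ext t
        rw [toCone_coe_apply, hu1, hx0, sub_zero, ContinuousMap.pow_apply, hxc_apply]
      simp only [hL2def, h, hu2, hx0, zero_smul, add_zero]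
  have hagree : Set.EqOn (⇑Θ) L2
      ((polynomialFunctions unitInterval : Subalgebra ℝ C(unitInterval, ℝ)) :
        Set C(unitInterval, ℝ)) := by
    intro q hq
    have hmem : q ∈ Set.range (Polynomial.toContinuousMapOnAlgHom unitInterval) := by
      rwa [← polynomialFunctions_coe]
    obtain ⟨p, hp⟩ := hmem
    have hq_eq : q = Polynomial.aeval xc p := by
      rw [← hp]
      have hxx : xc = Polynomial.toContinuousMapOnAlgHom unitInterval Polynomial.X := rfl
      rw [hxx, Polynomial.aeval_algHom_apply, Polynomial.aeval_X_left_apply]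
    have hsum : q = ∑ i ∈ Finset.range (p.natDegree + 1), p.coeff i • xc ^ i := by
      rw [hq_eq, Polynomial.aeval_eq_sum_range]
    have h1 : Θ q = ∑ i ∈ Finset.range (p.natDegree + 1), p.coeff i • a ^ i := by
      rw [hsum, map_sum]
      refine Finset.sum_congr rfl fun i _ => ?_
      rw [map_smul, map_pow, hTxc]
    have h2 : L2 q = ∑ i ∈ Finset.range (p.natDegree + 1), p.coeff i • a ^ i := by
      rw [hsum]
      rw [show (∑ i ∈ Finset.range (p.natDegree + 1), p.coeff i • xc ^ i) =
        ∑ i ∈ Finset.range (p.natDegree + 1), p.coeff i • xc ^ i from rfl]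
      induction (Finset.range (p.natDegree + 1)) using Finset.induction with
      | empty =>
        simp only [Finset.sum_empty]
        have hz : L2 0 = 0 := by
          have := hL2_smul 0 0
          simpa using this
        rw [hz]
      | insert _ _ hnotmem ih =>
        rw [Finset.sum_insert hnotmem, Finset.sum_insert hnotmem, hL2_add, ih,
          hL2_smul, hL2pow]
    rw [h1, h2]
  have hdense : Dense
      ((polynomialFunctions unitInterval : Subalgebra ℝ C(unitInterval, ℝ)) :
        Set C(unitInterval, ℝ)) := by
    have h := polynomialFunctions_closure_eq_top'
    have h2 := congrArg (fun S : Subalgebra ℝ C(unitInterval, ℝ) => (S : Set C(unitInterval, ℝ))) h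
    simp only [Subalgebra.topologicalClosure_coe, Algebra.coe_top] at h2
    rw [dense_iff_closure_eq]
    exact h2
  have hfuneq : ⇑Θ = L2 := Continuous.ext_on hdense hT_cont hL2_cont hagree
  -- find t₀ where f is nonzero
  have hf0 : (f : C(unitInterval, D)) 0 = 0 := f.2
  obtain ⟨t₀, ht₀⟩ : ∃ t : unitInterval, (f : C(unitInterval, D)) t ≠ 0 := by
    by_contra h
    push_neg at h
    exact hfne (Subtype.ext (ContinuousMap.ext fun t => h t))
  set r : ℝ := (t₀ : ℝ) with hr
  have hrpos : 0 < r := by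
    rcases lt_or_eq_of_le t₀.2.1 with h | h
    · exact h
    · exfalso
      apply ht₀
      have h3 : t₀ = 0 := Subtype.ext h.symm
      rw [h3, hf0]
  -- g = star f * f is in the kernel and nonzero at t₀
  set g : cone D := star f * f with hg
  have hgψ : ψ g = 0 := by rw [hg, map_mul, map_star, hf, mul_zero]
  set g₀ : D := (g : C(unitInterval, D)) t₀ with hg₀
  have hg₀eq : g₀ = star ((f : C(unitInterval, D)) t₀) * (f : C(unitInterval, D)) t₀ := rfl
  have hg₀ne : g₀ ≠ 0 := by
    rw [hg₀eq]
    exact fun h => ht₀ ((CStarRing.star_mul_self_eq_zero_iff _).mp h)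
  -- simplicity: 1 is approximated by elements of the ideal generated by g₀
  set S : Submodule ℂ D := Submodule.span ℂ {y : D | ∃ c d : D, y = c * g₀ * d} with hS
  have hSleft : ∀ x z : D, z ∈ S → x * z ∈ S := by
    intro x z hz
    induction hz using Submodule.span_induction with
    | mem y hy =>
      obtain ⟨c, d, rfl⟩ := hy
      exact Submodule.subset_span ⟨x * c, d, by noncomm_ring⟩
    | zero => rw [mul_zero]; exact S.zero_mem
    | add y y' _ _ ih ih' => rw [mul_add]; exact S.add_mem ih ih'
    | smul c y _ ih => rw [mul_smul_comm]; exact S.smul_mem c ih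
  have hSright : ∀ x z : D, z ∈ S → z * x ∈ S := by
    intro x z hz
    induction hz using Submodule.span_induction with
    | mem y hy =>
      obtain ⟨c, d, rfl⟩ := hy
      exact Submodule.subset_span ⟨c, d * x, by noncomm_ring⟩
    | zero => rw [zero_mul]; exact S.zero_mem
    | add y y' _ _ ih ih' => rw [add_mul]; exact S.add_mem ih ih'
    | smul c y _ ih => rw [smul_mul_assoc]; exact S.smul_mem c ih
  set K : TwoSidedIdeal D := TwoSidedIdeal.mk' (closure (S : Set D))
    (subset_closure S.zero_mem)
    (fun hx hy => map_mem_closure₂ continuous_add hx hy fun _ hha _ hhb => S.add_mem hha hhb)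
    (fun hx => map_mem_closure continuous_neg hx fun _ hh => S.neg_mem hh)
    (fun {x y} hy => map_mem_closure (f := fun z => x * z) (continuous_mul_left x) hy fun z hz => hSleft x z hz)
    (fun {x y} hx => map_mem_closure (f := fun z => z * y) (continuous_mul_right y) hx fun z hz => hSright y z hz)
    with hKdef
  have hKmem : ∀ z : D, z ∈ K ↔ z ∈ closure (S : Set D) := by
    intro z
    rw [hKdef, TwoSidedIdeal.mem_mk']
  have hKclosed : IsClosed (K : Set D) := by
    rw [hKdef, TwoSidedIdeal.coe_mk']
    exact isClosed_closure
  have hg₀K : g₀ ∈ K := by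
    rw [hKmem]
    exact subset_closure (Submodule.subset_span ⟨1, 1, by simp⟩)
  have hKtop : K = ⊤ := by
    rcases hsimple K hKclosed with h | h
    · exfalso
      have hmem := hg₀K
      rw [h, TwoSidedIdeal.mem_bot] at hmem
      exact hg₀ne hmem
    · exact h
  have h1cl : (1 : D) ∈ closure (S : Set D) := by
    rw [← hKmem, hKtop]
    exact TwoSidedIdeal.mem_top D
  obtain ⟨s, hsS, hs_close⟩ : ∃ s ∈ S, ‖s - 1‖ < 1 / 4 := by
    obtain ⟨s, hsS, hd⟩ := Metric.mem_closure_iff.mp h1cl (1 / 4) (by norm_num)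
    exact ⟨s, hsS, by rwa [dist_comm, dist_eq_norm] at hd⟩
  -- build an element u of the kernel with u t₀ = r² • s
  obtain ⟨u, huψ, hut₀⟩ : ∃ u : cone D, ψ u = 0 ∧
      (u : C(unitInterval, D)) t₀ = (r ^ 2) • s := by
    clear hs_close
    induction hsS using Submodule.span_induction with
    | mem y hy =>
      obtain ⟨c, d, rfl⟩ := hy
      refine ⟨coneElem c * g * coneElem d, ?_, ?_⟩
      · rw [map_mul, map_mul, hgψ, mul_zero, zero_mul]
      · show ((coneElem c : C(unitInterval, D)) t₀) * ((g : C(unitInterval, D)) t₀) *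
          ((coneElem d : C(unitInterval, D)) t₀) = (r ^ 2) • (c * g₀ * d)
        show (r • c) * g₀ * (r • d) = (r ^ 2) • (c * g₀ * d)
        rw [smul_mul_assoc, smul_mul_assoc, mul_smul_comm, smul_smul, pow_two]
    | zero => exact ⟨0, map_zero ψ, by simp⟩
    | add y y' _ _ ih ih' =>
      obtain ⟨u, hu1, hu2⟩ := ih
      obtain ⟨v, hv1, hv2⟩ := ih'
      refine ⟨u + v, by rw [map_add, hu1, hv1, add_zero], ?_⟩
      show (u : C(unitInterval, D)) t₀ + (v : C(unitInterval, D)) t₀ = _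
      rw [hu2, hv2, ← smul_add]
    | smul c y _ ih =>
      obtain ⟨u, hu1, hu2⟩ := ih
      refine ⟨c • u, by rw [map_smul, hu1, smul_zero], ?_⟩
      show c • ((u : C(unitInterval, D)) t₀) = (r ^ 2) • (c • y)
      rw [hu2, smul_comm]
  -- k = star u * u : selfadjoint-valued kernel element, bounded below at t₀
  set k : cone D := star u * u with hk
  have hkψ : ψ k = 0 := by rw [hk, map_mul, map_star, huψ, mul_zero]
  set kc : C(unitInterval, D) := (k : C(unitInterval, D)) with hkc
  have hkc_apply : ∀ t, kc t = star ((u : C(unitInterval, D)) t) * (u : C(unitInterval, D)) t :=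
    fun t => rfl
  have hk_sa : ∀ t, IsSelfAdjoint (kc t) := fun t => by
    rw [hkc_apply]
    exact IsSelfAdjoint.star_mul_self _
  set c₀ : ℝ := r ^ 4 / 2 with hc₀
  have hc₀pos : 0 < c₀ := by positivity
  -- star s * s ≥ (1/2) • 1
  have hhalf : ((1 : ℝ) / 2) • (1 : D) ≤ star s * s := by
    set e : D := s - 1 with he
    have hse : s = 1 + e := by rw [he]; abel
    have hexp : star s * s = 1 + (e + star e) + star e * e := by
      rw [hse, star_add, star_one]
      noncomm_ring
    have h1 : (0 : D) ≤ star e * e := star_mul_self_nonneg e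
    have h2 : IsSelfAdjoint (e + star e) := by
      rw [IsSelfAdjoint, star_add, star_star, add_comm]
    have h3 : -(algebraMap ℝ D ‖e + star e‖) ≤ e + star e :=
      h2.neg_algebraMap_norm_le_self
    have h4 : ‖e + star e‖ ≤ 1 / 2 := by
      calc ‖e + star e‖ ≤ ‖e‖ + ‖star e‖ := norm_add_le _ _
        _ = ‖e‖ + ‖e‖ := by rw [norm_star]
        _ ≤ 1 / 4 + 1 / 4 := add_le_add hs_close.le hs_close.le
        _ = 1 / 2 := by norm_num
    have h5 : -(algebraMap ℝ D (1 / 2)) ≤ e + star e := by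
      refine le_trans ?_ h3
      rw [neg_le_neg_iff]
      exact algebraMap_mono' h4
    calc ((1 : ℝ) / 2) • (1 : D) = 1 + (-(algebraMap ℝ D (1 / 2))) + 0 := by
          rw [Algebra.algebraMap_eq_smul_one, add_zero, ← sub_eq_add_neg,
            eq_sub_iff_add_eq, ← add_smul]
          norm_num
      _ ≤ 1 + (e + star e) + star e * e := add_le_add (add_le_add le_rfl h5) h1
      _ = star s * s := hexp.symm
  have hkt₀ : algebraMap ℝ D c₀ ≤ kc t₀ := by
    rw [hkc_apply, hut₀, star_smul, star_trivial, smul_mul_smul_comm]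
    have heq2 : algebraMap ℝ D c₀ = (r ^ 2 * r ^ 2) • (((1 : ℝ) / 2) • (1 : D)) := by
      rw [smul_smul, Algebra.algebraMap_eq_smul_one]
      congr 1
      rw [hc₀]
      ring
    rw [heq2]
    exact real_smul_mono (by positivity) hhalf
  -- invertibility in a neighbourhood of t₀
  obtain ⟨δ₁, hδ₁pos, hδ₁⟩ := Metric.continuousAt_iff.mp (kc.continuous.continuousAt (x := t₀))
    (c₀ / 2) (by positivity)
  set δ : ℝ := min δ₁ r with hδ
  have hδpos : 0 < δ := lt_min hδ₁pos hrpos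
  have hδler : δ ≤ r := min_le_right _ _
  have hUnit : ∀ t : unitInterval, dist t t₀ < δ → IsUnit (kc t) := by
    intro t ht
    have h1 : dist (kc t) (kc t₀) < c₀ / 2 := hδ₁ (lt_of_lt_of_le ht (min_le_left _ _))
    have h1' : ‖kc t - kc t₀‖ < c₀ / 2 := by rwa [dist_eq_norm] at h1
    have hsa : IsSelfAdjoint (kc t - kc t₀) := (hk_sa t).sub (hk_sa t₀)
    have h2 : -(algebraMap ℝ D ‖kc t - kc t₀‖) ≤ kc t - kc t₀ :=
      hsa.neg_algebraMap_norm_le_self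
    have h3 : -(algebraMap ℝ D (c₀ / 2)) ≤ kc t - kc t₀ := by
      refine le_trans ?_ h2
      rw [neg_le_neg_iff]
      exact algebraMap_mono' h1'.le
    have h4 : algebraMap ℝ D (c₀ / 2) ≤ kc t := by
      have heq3 : kc t = kc t₀ + (kc t - kc t₀) := by abel
      have hle : algebraMap ℝ D c₀ + (-(algebraMap ℝ D (c₀ / 2))) ≤ kc t₀ + (kc t - kc t₀) :=
        add_le_add hkt₀ h3
      rw [← heq3] at hle
      refine le_trans ?_ hle
      rw [← sub_eq_add_neg, ← map_sub]
      apply algebraMap_mono'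
      linarith
    refine CStarAlgebra.isUnit_of_le _ h4 ⟨algebraMap_nonneg' (by positivity), ?_⟩
    exact (isUnit_iff_ne_zero.mpr (by positivity)).map (algebraMap ℝ D)
  -- bump function β at t₀
  have hbcont : Continuous (fun t : unitInterval => max 0 (1 - (2 / δ) * dist t t₀)) := by
    refine continuous_const.max ?_
    exact continuous_const.sub (continuous_const.mul (continuous_id.dist continuous_const))
  set β : C(unitInterval, ℝ) := ⟨fun t => max 0 (1 - (2 / δ) * dist t t₀), hbcont⟩ with hβ
  have hβt₀ : β t₀ = 1 := by
    show max 0 (1 - (2 / δ) * dist t₀ t₀) = 1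
    rw [dist_self]
    norm_num
  have hβzero : ∀ t, δ / 2 ≤ dist t t₀ → β t = 0 := by
    intro t ht
    show max 0 (1 - (2 / δ) * dist t t₀) = 0
    apply max_eq_left
    have h1 : (1 : ℝ) ≤ (2 / δ) * dist t t₀ := by
      rw [div_mul_eq_mul_div, le_div_iff₀ hδpos]
      nlinarith
    linarith
  have hdist0 : dist (0 : unitInterval) t₀ = r := by
    rw [Subtype.dist_eq, Real.dist_eq]
    show |(0 : ℝ) - r| = r
    rw [zero_sub, abs_neg, abs_of_pos hrpos]
  have hβ00 : β 0 = 0 := hβzero 0 (by rw [hdist0]; linarith)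
  -- m = β • (kc)⁻¹
  have hm_cont : Continuous (fun t : unitInterval => β t • Ring.inverse (kc t)) := by
    rw [continuous_iff_continuousAt]
    intro t
    rcases lt_or_ge (dist t t₀) δ with hlt | hge
    · have hinv : ContinuousAt (fun t : unitInterval => Ring.inverse (kc t)) t := by
        have hu := hUnit t hlt
        have h5 := NormedRing.inverse_continuousAt hu.unit
        rw [hu.unit_spec] at h5
        exact h5.comp kc.continuous.continuousAt
      exact (β.continuous.continuousAt).smul hinv
    · have hopen : IsOpen {s : unitInterval | δ / 2 < dist s t₀} :=
        isOpen_lt continuous_const (continuous_id.dist continuous_const)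
      have hmem : t ∈ {s : unitInterval | δ / 2 < dist s t₀} := by
        show δ / 2 < dist t t₀
        linarith
      refine (continuousAt_const (y := (0 : D))).congr ?_
      refine Filter.eventuallyEq_of_mem (hopen.mem_nhds hmem) fun s hs => ?_
      rw [hβzero s (le_of_lt hs), zero_smul]
  set m : cone D := ⟨⟨fun t => β t • Ring.inverse (kc t), hm_cont⟩, by
    show β 0 • Ring.inverse (kc 0) = 0
    rw [hβ00, zero_smul]⟩ with hm
  -- m * k is the scalar function β, pulled into the cone
  have hwβ : (m * k : cone D) = toCone β := by
    apply Subtype.ext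
    ext t
    show (β t • Ring.inverse (kc t)) * kc t = (β t - β 0) • (1 : D)
    rw [hβ00, sub_zero]
    rcases lt_or_ge (dist t t₀) δ with hlt | hge
    · rw [smul_mul_assoc, Ring.inverse_mul_cancel _ (hUnit t hlt)]
    · rw [hβzero t (by linarith), zero_smul, zero_mul, zero_smul]
  have hψw0 : ψ (toCone β) = 0 := by rw [← hwβ, map_mul, hkψ, mul_zero]
  -- but Θ β = ψ (toCone β), and Θ β ≠ 0 since β t₀ = 1 and t₀ ∈ spectrum
  have hTβ : Θ β = 0 := by
    have h := congrFun hfuneq β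
    rw [h]
    show ψ (toCone β) + β 0 • (1 : C) = 0
    rw [hψw0, hβ00, zero_smul, add_zero]
  have hβcomp : β.comp eC = 0 := by
    apply (cfcHom_isClosedEmbedding ha).injective
    rw [← hT_apply, hTβ, map_zero]
  have hrmem : r ∈ spectrum ℝ a := by rw [hspec]; exact t₀.2
  have hβt₀' : β t₀ = 0 := by
    have h := congrFun (congrArg (fun F : C(spectrum ℝ a, ℝ) => ⇑F) hβcomp) ⟨r, hrmem⟩
    have heq4 : eC ⟨r, hrmem⟩ = t₀ := Subtype.ext rfl
    simpa [ContinuousMap.comp_apply, heq4] using h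
  rw [hβt₀] at hβt₀'
  exact one_ne_zero hβt₀'
end

section
/- Let ω be a free ultrafilter on ℕ and (B_i) a sequence of simple purely infinite C*-algebras. Then for every nonzero positive element b in the ultraproduct ∏_{i→ω} B_i with ‖b‖ = 1 (in the unital case), there exists c in the ultraproduct with c* b c = 1. (Special case: the ultraproduct of unital simple purely infinite C*-algebras is simple and purely infinite.) -/
open scoped Real

lemma keyLemma {A : Type*} [CStarAlgebra A] [PartialOrder A] [StarOrderedRing A]
    (hpi : ∀ b : A, 0 ≤ b → b ≠ 0 → ∃ c, star c * b * c = 1)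
    (a : A) (ha : 0 ≤ a) (han : 1/2 < ‖a‖) :
    ∃ c : A, star c * a * c = 1 ∧ ‖c‖ ≤ Real.sqrt 2 := by
  have haz : a ≠ 0 := by
    intro h; rw [h, norm_zero] at han; linarith
  have hA : Nontrivial A := nontrivial_of_ne a 0 haz
  set f : ℝ → ℝ := fun t => max (t - 1/2) 0 with hf
  set f' : ℝ → ℝ := fun t => Real.sqrt (f t) with hf'
  set s : ℝ → ℝ := fun t => (Real.sqrt (max t (1/2)))⁻¹ with hs
  have hfc : Continuous f := (continuous_id.sub continuous_const).max continuous_const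
  have hf'c : Continuous f' := Real.continuous_sqrt.comp hfc
  have hsc : Continuous s := by
    apply (Real.continuous_sqrt.comp (continuous_id.max continuous_const)).inv₀
    intro t
    exact ne_of_gt (Real.sqrt_pos.2 (lt_of_lt_of_le (by norm_num) (le_max_right _ _)))
  set g : A := cfc f a with hg
  have hgpos : 0 ≤ g := cfc_nonneg fun x _ => le_max_right _ _
  have hgne : g ≠ 0 := by
    intro h
    have hmem : f ‖a‖ ∈ spectrum ℝ g := by
      rw [hg, cfc_map_spectrum f a]
      exact ⟨‖a‖, CStarAlgebra.norm_mem_spectrum_of_nonneg ha, rfl⟩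
    rw [h, spectrum.zero_eq] at hmem
    simp only [Set.mem_singleton_iff, hf] at hmem
    have : (0:ℝ) < max (‖a‖ - 1/2) 0 := lt_max_of_lt_left (by linarith)
    rw [hmem] at this; exact lt_irrefl _ this
  obtain ⟨d, hd⟩ := hpi g hgpos hgne
  set x : A := cfc f' a * d with hx
  have hf'sa : star (cfc f' a) = cfc f' a := IsSelfAdjoint.cfc
  have hssa : star (cfc s a) = cfc s a := IsSelfAdjoint.cfc
  have hxx : star x * x = 1 := by
    rw [hx, star_mul, hf'sa]
    calc star d * cfc f' a * (cfc f' a * d)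
        = star d * (cfc f' a * cfc f' a) * d := by noncomm_ring
      _ = star d * g * d := by
          rw [← cfc_mul f' f' a]
          congr 1
          congr 1
          rw [hg]
          exact cfc_congr fun t _ => Real.mul_self_sqrt (le_max_right _ _)
      _ = 1 := hd
  have hxnorm : ‖x‖ = 1 := by
    have h1 := CStarRing.norm_star_mul_self (x := x)
    rw [hxx, norm_one] at h1
    nlinarith [norm_nonneg x]
  refine ⟨cfc s a * x, ?_, ?_⟩
  · have m1 : cfc s a * a * cfc s a = cfc (fun t => s t * t * s t) a := by
      nth_rewrite 2 [← cfc_id' ℝ a (.of_nonneg ha)]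
      rw [← cfc_mul s _ a hsc.continuousOn continuous_id'.continuousOn,
        ← cfc_mul (fun x => s x * x) s a (hsc.mul continuous_id').continuousOn hsc.continuousOn]
    have key : cfc f' a * (cfc s a * a * cfc s a) * cfc f' a = g := by
      rw [m1, ← cfc_mul f' (fun t => s t * t * s t) a hf'c.continuousOn ((hsc.mul continuous_id').mul hsc).continuousOn,
        ← cfc_mul (fun t => f' t * (s t * t * s t)) f' a (hf'c.mul ((hsc.mul continuous_id').mul hsc)).continuousOn hf'c.continuousOn,
        hg]
      apply cfc_congr
      intro t ht
      have ht0 : 0 ≤ t := spectrum_nonneg_of_nonneg ha ht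
      rcases le_or_gt t (1/2) with h | h
      · have hft : f t = 0 := max_eq_right (by linarith)
        show f' t * (s t * t * s t) * f' t = f t
        simp [hf', hft]
      · have hmax : max t (1/2) = t := max_eq_left h.le
        have hts : Real.sqrt t * Real.sqrt t = t := Real.mul_self_sqrt ht0
        have htsne : Real.sqrt t ≠ 0 := ne_of_gt (Real.sqrt_pos.2 (by linarith))
        have hq : s t * t * s t = 1 := by
          simp only [hs, hmax]
          field_simp
          exact (Real.sq_sqrt ht0).symm
        show f' t * (s t * t * s t) * f' t = f t
        rw [hq, mul_one, Real.mul_self_sqrt (le_max_right _ _)]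
    calc star (cfc s a * x) * a * (cfc s a * x)
        = star x * (cfc s a * a * cfc s a) * x := by
          rw [star_mul, hssa]; noncomm_ring
      _ = star d * (cfc f' a * (cfc s a * a * cfc s a) * cfc f' a) * d := by
          rw [hx, star_mul, hf'sa]; noncomm_ring
      _ = star d * g * d := by rw [key]
      _ = 1 := hd
  · calc ‖cfc s a * x‖ ≤ ‖cfc s a‖ * ‖x‖ := norm_mul_le _ _
      _ = ‖cfc s a‖ := by rw [hxnorm, mul_one]
      _ ≤ Real.sqrt 2 := by
          apply norm_cfc_le (by positivity)
          intro t ht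
          rw [Real.norm_eq_abs, abs_of_nonneg (by positivity)]
          have h2 : Real.sqrt 2 = (Real.sqrt (1/2))⁻¹ := by
            rw [one_div, Real.sqrt_inv, inv_inv]
          rw [h2, hs]
          have h3 : (0:ℝ) < Real.sqrt (1/2) := Real.sqrt_pos.2 (by norm_num)
          exact inv_anti₀ h3 (Real.sqrt_le_sqrt (le_max_right _ _))

open Filter in
/-- Ultraproducts of unital simple purely infinite C*-algebras are simple and purely
infinite: if each `B i` is unital, not `ℂ`, and for every nonzero positive `b` there is
`c` with `c* b c = 1`, then for every positive element of the ultraproduct of norm one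
(represented by a positive bounded sequence `b` with `‖b i‖ → 1` along `ω`) there is an
element `c` of the ultraproduct with `c* b c = 1`. -/
theorem ultraproduct_purely_infinite (B : ℕ → Type*) [∀ i, CStarAlgebra (B i)]
    [∀ i, PartialOrder (B i)] [∀ i, StarOrderedRing (B i)]
    (ω : Ultrafilter ℕ) (hfree : Filter.cofinite ≤ (ω : Filter ℕ))
    (hnontrivial : ∀ i, ∃ b : B i, ∀ z : ℂ, b ≠ z • (1 : B i))
    (hpi : ∀ i, ∀ b : B i, 0 ≤ b → b ≠ 0 → ∃ c : B i, star c * b * c = 1)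
    (b : ∀ i, B i) (hbpos : ∀ i, 0 ≤ b i)
    (hbnorm : Tendsto (fun i => ‖b i‖) (ω : Filter ℕ) (nhds 1)) :
    ∃ c : ∀ i, B i, (∃ C : ℝ, ∀ i, ‖c i‖ ≤ C) ∧
      Tendsto (fun i => ‖star (c i) * b i * c i - 1‖) (ω : Filter ℕ) (nhds 0) := by
  classical
  have key : ∀ i, 1/2 < ‖b i‖ → ∃ c : B i, star c * b i * c = 1 ∧ ‖c‖ ≤ Real.sqrt 2 :=
    fun i h => keyLemma (hpi i) (b i) (hbpos i) h
  refine ⟨fun i => if h : 1/2 < ‖b i‖ then (key i h).choose else 0, ⟨Real.sqrt 2, ?_⟩, ?_⟩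
  · intro i
    simp only
    by_cases h : 1/2 < ‖b i‖
    · rw [dif_pos h]; exact (key i h).choose_spec.2
    · rw [dif_neg h, norm_zero]; positivity
  · have hev : ∀ᶠ i in (ω : Filter ℕ), 1/2 < ‖b i‖ :=
      hbnorm.eventually (eventually_gt_nhds (by norm_num))
    refine Tendsto.congr' ?_ (tendsto_const_nhds (x := (0:ℝ)))
    filter_upwards [hev] with i hi
    beta_reduce
    rw [dif_pos hi, (key i hi).choose_spec.1, sub_self, norm_zero]
end
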